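/- arXiv:2111.12288 — 4 statements merged into one kernel-verified Lean document; each statement's English description precedes it below -/
import Mathlib

section
/- Let A ⊂ ℝⁿ be a cone with vertex x₀ and p ∈ Sⁿ⁻¹, δ₀ > 0 be such that p·(x - x₀) ≤ -δ₀ |x - x₀| for all x ∈ A. Then for h > 0 and ξ ∈ ℂⁿ with Re ξ = τ p, τ > 0, one has | ∫_{A \ B_h(x₀)} e^{ξ·(x-x₀)} dx | ≤ σ(S^{n-1}) (δ₀ τ)^{-n} Γ(n, δ₀ τ h), where σ(S^{n-1}) is the surface measure of the unit sphere and Γ(·,·) is the upper incomplete Gamma function. -/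
open MeasureTheory Real
open scoped RealInnerProductSpace

/-- The upper incomplete Gamma function `Γ(s, x) = ∫_x^∞ t^(s-1) e^(-t) dt`. -/
noncomputable def upperIncompleteGamma (s x : ℝ) : ℝ :=
  ∫ t in Set.Ioi x, t ^ (s - 1) * Real.exp (-t)

/-- The surface measure of the unit sphere `S^(n-1)` in `ℝⁿ`,
equal to `n` times the volume of the unit ball. -/
noncomputable def sphereSurface (n : ℕ) : ℝ :=
  n * (MeasureTheory.volume (Metric.ball (0 : EuclideanSpace ℝ (Fin n)) 1)).toReal

theorem cone_upper_estimate (n : ℕ) (hn : n = 2 ∨ n = 3)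
    (x₀ p : EuclideanSpace ℝ (Fin n)) (hp : ‖p‖ = 1) (δ₀ : ℝ) (hδ₀ : 0 < δ₀)
    (A : Set (EuclideanSpace ℝ (Fin n))) (hAmeas : MeasurableSet A)
    (hcone : ∀ x ∈ A, ∀ t : ℝ, 0 < t → x₀ + t • (x - x₀) ∈ A)
    (hhalf : ∀ x ∈ A, ⟪p, x - x₀⟫ ≤ -δ₀ * ‖x - x₀‖)
    (h τ : ℝ) (hh : 0 < h) (hτ : 0 < τ)
    (ξ : Fin n → ℂ) (hξ : ∀ i, (ξ i).re = τ * p i) :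
    ‖∫ x in A \ Metric.ball x₀ h,
        Complex.exp (∑ i, ξ i * ((x i - x₀ i : ℝ) : ℂ))‖ ≤
      sphereSurface n * (δ₀ * τ) ^ (-(n : ℝ)) * upperIncompleteGamma n (δ₀ * τ * h) := by
  have hn1 : 1 ≤ n := by rcases hn with rfl | rfl <;> norm_num
  haveI : Nontrivial (EuclideanSpace ℝ (Fin n)) := by
    rcases hn with rfl | rfl <;> infer_instance
  set c : ℝ := δ₀ * τ with hcdef
  have hc : 0 < c := mul_pos hδ₀ hτ
  set B : EuclideanSpace ℝ (Fin n) → ℝ := fun x => Real.exp (-(c * ‖x - x₀‖)) with hBdef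
  have hBint0 : Integrable (fun y : EuclideanSpace ℝ (Fin n) => Real.exp (-(c * ‖y‖))) := by
    have hint := (integrable_one_add_norm (E := EuclideanSpace ℝ (Fin n))
      (μ := volume) (r := (n : ℝ) + 1)
      (by rw [finrank_euclideanSpace_fin]; norm_num)).const_mul
      ((Nat.factorial (n+1) : ℝ) * c⁻¹ ^ (n + 1) * Real.exp c)
    refine hint.mono' ((Real.continuous_exp.comp (by fun_prop)).aestronglyMeasurable) ?_
    filter_upwards with y
    have hr : (0:ℝ) ≤ ‖y‖ := norm_nonneg y
    set r : ℝ := ‖y‖ with hrdef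
    rw [Real.norm_eq_abs, abs_of_pos (Real.exp_pos _)]
    have h1 : (c * (1 + r)) ^ (n + 1) / (Nat.factorial (n+1)) ≤ Real.exp (c * (1 + r)) :=
      Real.pow_div_factorial_le_exp _ (by positivity) (n + 1)
    have h2 : (1 + r) ^ (n + 1) ≤ (Nat.factorial (n+1) : ℝ) * c⁻¹ ^ (n + 1) * Real.exp (c * (1 + r)) := by
      rw [div_le_iff₀ (by positivity)] at h1
      rw [mul_pow] at h1
      calc (1 + r) ^ (n + 1) = c⁻¹ ^ (n + 1) * (c ^ (n + 1) * (1 + r) ^ (n + 1)) := by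
            rw [← mul_assoc, ← mul_pow, inv_mul_cancel₀ hc.ne', one_pow, one_mul]
        _ ≤ c⁻¹ ^ (n + 1) * (Real.exp (c * (1 + r)) * (Nat.factorial (n+1) : ℝ)) :=
            mul_le_mul_of_nonneg_left h1 (by positivity)
        _ = (Nat.factorial (n+1) : ℝ) * c⁻¹ ^ (n + 1) * Real.exp (c * (1 + r)) := by ring
    have key : Real.exp (-(c * r)) * (1 + r) ^ (n + 1)
        ≤ (Nat.factorial (n+1) : ℝ) * c⁻¹ ^ (n + 1) * Real.exp c := by
      calc Real.exp (-(c * r)) * (1 + r) ^ (n + 1)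
          ≤ Real.exp (-(c * r)) * ((Nat.factorial (n+1) : ℝ) * c⁻¹ ^ (n + 1) * Real.exp (c * (1 + r))) :=
            mul_le_mul_of_nonneg_left h2 (Real.exp_nonneg _)
        _ = (Nat.factorial (n+1) : ℝ) * c⁻¹ ^ (n + 1) * (Real.exp (-(c * r)) * Real.exp (c * (1 + r))) := by
            ring
        _ = (Nat.factorial (n+1) : ℝ) * c⁻¹ ^ (n + 1) * Real.exp c := by
            rw [← Real.exp_add, show -(c * r) + c * (1 + r) = c by ring]
    have hrp : (1 + r) ^ (-((n : ℝ) + 1)) = ((1 + r) ^ (n + 1) : ℝ)⁻¹ := by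
      rw [show -((n : ℝ) + 1) = -((n + 1 : ℕ) : ℝ) by push_cast; ring,
        Real.rpow_neg (by positivity), Real.rpow_natCast]
    rw [hrp]
    rw [← div_eq_mul_inv, le_div_iff₀ (by positivity)]
    exact key
  have hBint : Integrable B := hBint0.comp_sub_right x₀
  set g : EuclideanSpace ℝ (Fin n) → ℂ :=
    fun x => Complex.exp (∑ i, ξ i * ((x i - x₀ i : ℝ) : ℂ)) with hgdef
  have hgcont : Continuous g := by
    apply Complex.continuous_exp.comp
    apply continuous_finset_sum
    intro i _
    exact continuous_const.mul (Complex.continuous_ofReal.comp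
      ((EuclideanSpace.proj i).continuous.sub continuous_const))
  have hpt : ∀ x ∈ A \ Metric.ball x₀ h, ‖g x‖ ≤ B x := by
    intro x hx
    rw [hgdef]
    simp only []
    rw [Complex.norm_exp]
    apply Real.exp_le_exp.2
    have hsub : ∀ i, (x - x₀) i = x i - x₀ i := fun i => rfl
    have hre : (∑ i, ξ i * ((x i - x₀ i : ℝ) : ℂ)).re = τ * ⟪p, x - x₀⟫ := by
      rw [Complex.re_sum, PiLp.inner_apply, Finset.mul_sum]
      refine Finset.sum_congr rfl fun i _ => ?_
      simp only [Complex.mul_re, Complex.ofReal_re, Complex.ofReal_im, mul_zero, sub_zero,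
        RCLike.inner_apply, conj_trivial]
      rw [hξ i, hsub i]; ring
    rw [hre]
    calc τ * ⟪p, x - x₀⟫ ≤ τ * (-δ₀ * ‖x - x₀‖) :=
          mul_le_mul_of_nonneg_left (hhalf x hx.1) hτ.le
      _ = -(c * ‖x - x₀‖) := by rw [hcdef]; ring
  have hSmeas : MeasurableSet (A \ Metric.ball x₀ h) := hAmeas.diff measurableSet_ball
  have hBS : IntegrableOn B (A \ Metric.ball x₀ h) := hBint.integrableOn
  have hgint : IntegrableOn (fun x => ‖g x‖) (A \ Metric.ball x₀ h) := by
    refine Integrable.mono' hBS hgcont.norm.aestronglyMeasurable.restrict ?_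
    filter_upwards [ae_restrict_mem hSmeas] with x hx
    simpa using hpt x hx
  have key : ‖∫ x in A \ Metric.ball x₀ h, g x‖ ≤
      (n : ℝ) * (volume (Metric.ball (0 : EuclideanSpace ℝ (Fin n)) 1)).toReal *
        (c⁻¹ ^ n * ∫ t in Set.Ioi (c * h), t ^ (n - 1) * Real.exp (-t)) := by
    calc ‖∫ x in A \ Metric.ball x₀ h, g x‖ ≤ ∫ x in A \ Metric.ball x₀ h, ‖g x‖ :=
          norm_integral_le_integral_norm _
      _ ≤ ∫ x in A \ Metric.ball x₀ h, B x := setIntegral_mono_on hgint hBS hSmeas hpt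
      _ ≤ ∫ x in (Metric.ball x₀ h)ᶜ, B x := by
          refine setIntegral_mono_set hBint.integrableOn ?_ ?_
          · filter_upwards with x using Real.exp_nonneg _
          · exact HasSubset.Subset.eventuallyLE (fun x hx => hx.2)
      _ = ∫ y : EuclideanSpace ℝ (Fin n),
            Set.indicator (Set.Ici h) (fun r => Real.exp (-(c * r))) ‖y‖ := by
          rw [← integral_indicator measurableSet_ball.compl,
            ← integral_sub_right_eq_self
              (fun y : EuclideanSpace ℝ (Fin n) =>
                Set.indicator (Set.Ici h) (fun r => Real.exp (-(c * r))) ‖y‖) x₀]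
          congr 1; funext x
          by_cases hx : h ≤ ‖x - x₀‖
          · rw [Set.indicator_of_mem (show x ∈ (Metric.ball x₀ h)ᶜ by
                simpa [Metric.mem_ball, dist_eq_norm, not_lt] using hx) B,
              Set.indicator_of_mem (show ‖x - x₀‖ ∈ Set.Ici h from hx)]
          · rw [Set.indicator_of_notMem (show x ∉ (Metric.ball x₀ h)ᶜ by
                simpa [Metric.mem_ball, dist_eq_norm] using not_le.1 hx) B,
              Set.indicator_of_notMem (show ‖x - x₀‖ ∉ Set.Ici h from hx)]
      _ = (n : ℝ) * (volume (Metric.ball (0 : EuclideanSpace ℝ (Fin n)) 1)).toReal *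
            ∫ r in Set.Ioi (0:ℝ),
              r ^ (n - 1) • Set.indicator (Set.Ici h) (fun r => Real.exp (-(c * r))) r := by
          rw [MeasureTheory.integral_fun_norm_addHaar volume
            (fun r => Set.indicator (Set.Ici h) (fun r => Real.exp (-(c * r))) r)]
          rw [finrank_euclideanSpace_fin, nsmul_eq_mul, smul_eq_mul, mul_assoc]
          rfl
      _ = (n : ℝ) * (volume (Metric.ball (0 : EuclideanSpace ℝ (Fin n)) 1)).toReal *
            (c⁻¹ ^ n * ∫ t in Set.Ioi (c * h), t ^ (n - 1) * Real.exp (-t)) := by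
          congr 1
          have e1 : ∀ r : ℝ, r ^ (n - 1) • Set.indicator (Set.Ici h)
              (fun r => Real.exp (-(c * r))) r
              = Set.indicator (Set.Ici h) (fun r => r ^ (n - 1) * Real.exp (-(c * r))) r := by
            intro r
            by_cases hr : r ∈ Set.Ici h
            · simp [Set.indicator_of_mem hr]
            · simp [Set.indicator_of_notMem hr]
          simp_rw [e1]
          rw [setIntegral_indicator measurableSet_Ici,
            Set.inter_eq_self_of_subset_right (show Set.Ici h ⊆ Set.Ioi 0 from fun r hr => lt_of_lt_of_le hh hr),
            integral_Ici_eq_integral_Ioi]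
          have e2 := integral_comp_mul_left_Ioi
            (fun t : ℝ => t ^ (n - 1) * Real.exp (-t)) h hc
          simp only [smul_eq_mul] at e2
          have e3 : (fun r : ℝ => (c * r) ^ (n - 1) * Real.exp (-(c * r)))
              = fun r : ℝ => c ^ (n - 1) * (r ^ (n - 1) * Real.exp (-(c * r))) := by
            funext r; rw [mul_pow]; ring
          rw [e3, integral_const_mul] at e2
          have hcn : (c : ℝ) ^ (n - 1) ≠ 0 := pow_ne_zero _ hc.ne'
          have e4 : ∫ r in Set.Ioi h, r ^ (n - 1) * Real.exp (-(c * r))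
              = c⁻¹ ^ (n - 1) * (c⁻¹ * ∫ t in Set.Ioi (c * h), t ^ (n - 1) * Real.exp (-t)) := by
            rw [← e2, ← mul_assoc, inv_pow, inv_mul_cancel₀ hcn, one_mul]
          rw [e4, ← mul_assoc, ← pow_succ, Nat.sub_add_cancel hn1]
  refine key.trans (le_of_eq ?_)
  rw [sphereSurface]
  have hG : upperIncompleteGamma n (c * h)
      = ∫ t in Set.Ioi (c * h), t ^ (n - 1) * Real.exp (-t) := by
    rw [upperIncompleteGamma]
    refine setIntegral_congr_fun measurableSet_Ioi fun t ht => ?_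
    have ht0 : 0 < t := lt_trans (mul_pos hc hh) ht
    rw [show ((n:ℝ) - 1) = ((n - 1 : ℕ) : ℝ) by rw [Nat.cast_sub hn1]; norm_num,
      Real.rpow_natCast]
  rw [hG]
  have hcr : (c : ℝ) ^ (-(n:ℝ)) = c⁻¹ ^ n := by
    rw [Real.rpow_neg hc.le, Real.rpow_natCast, ← inv_pow]
  rw [hcr]
  ring
end

section
/- Let A ⊂ ℝⁿ be a cone with vertex x₀ and p ∈ Sⁿ⁻¹, δ₀ > 0 be such that p·(x - x₀) ≤ -δ₀ |x - x₀| for all x ∈ A, and let S_h = A ∩ B_h(x₀). Then for ξ ∈ ℂⁿ with Re ξ = τ p, τ > 0, one has | ∫_{S_h} e^{ξ·(x-x₀)} dx | ≤ σ(S^{n-1}) (δ₀ τ)^{-n} γ(n, δ₀ τ h) ≤ σ(S^{n-1}) (n-1)! (δ₀ τ)^{-n}. -/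
open MeasureTheory Real
open scoped RealInnerProductSpace

/-- The lower incomplete Gamma function `γ(s, x) = ∫_0^x t^(s-1) e^(-t) dt`. -/
noncomputable def lowerIncompleteGamma (s x : ℝ) : ℝ :=
  ∫ t in Set.Ioc (0 : ℝ) x, t ^ (s - 1) * Real.exp (-t)

lemma polar_ball (n : ℕ) (hn : 0 < n) (c h : ℝ) (hc : 0 < c) (hh : 0 < h) :
    ∫ x in Metric.ball (0 : EuclideanSpace ℝ (Fin n)) h, Real.exp (-(c * ‖x‖)) =
      sphereSurface n * ∫ r in Set.Ioc (0 : ℝ) h, r ^ (n - 1) * Real.exp (-(c * r)) := by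
  haveI : Nontrivial (EuclideanSpace ℝ (Fin n)) :=
    Module.nontrivial_of_finrank_pos (R := ℝ) (by rw [finrank_euclideanSpace_fin]; exact hn)
  set f : ℝ → ℝ := fun r => Set.indicator (Set.Iio h) (fun r => Real.exp (-(c * r))) r with hf
  have h1 : ∫ x in Metric.ball (0 : EuclideanSpace ℝ (Fin n)) h, Real.exp (-(c * ‖x‖)) =
      ∫ x : EuclideanSpace ℝ (Fin n), f ‖x‖ := by
    rw [← integral_indicator measurableSet_ball]
    congr 1; ext x
    by_cases hx : ‖x‖ < h <;> simp [hf, Set.indicator_apply, Metric.mem_ball, dist_zero_right, hx]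
  rw [h1, integral_fun_norm_addHaar volume f, finrank_euclideanSpace_fin]
  have h2 : ∀ y : ℝ, y ^ (n - 1) • f y =
      Set.indicator (Set.Iio h) (fun y => y ^ (n - 1) * Real.exp (-(c * y))) y := by
    intro y; by_cases hy : y ∈ Set.Iio h <;> simp [hf, hy]
  simp_rw [h2]
  rw [setIntegral_indicator measurableSet_Iio, Set.Ioi_inter_Iio,
    ← integral_Ioc_eq_integral_Ioo]
  simp [sphereSurface, mul_assoc, measureReal_def]

lemma lig_nat (n : ℕ) (hn : 0 < n) (x : ℝ) :
    lowerIncompleteGamma n x = ∫ t in Set.Ioc (0 : ℝ) x, t ^ (n - 1) * Real.exp (-t) := by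
  unfold lowerIncompleteGamma
  have hcast : ((n : ℝ) - 1) = ((n - 1 : ℕ) : ℝ) := by
    rw [Nat.cast_sub hn]; simp
  rw [hcast]
  simp_rw [Real.rpow_natCast]

lemma sub_rule (n : ℕ) (hn : 0 < n) (c h : ℝ) (hc : 0 < c) (hh : 0 < h) :
    ∫ r in Set.Ioc (0 : ℝ) h, r ^ (n - 1) * Real.exp (-(c * r)) =
      c ^ (-(n : ℝ)) * lowerIncompleteGamma n (c * h) := by
  have hch : (0 : ℝ) ≤ c * h := by positivity
  rw [lig_nat n hn, ← intervalIntegral.integral_of_le hh.le,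
    ← intervalIntegral.integral_of_le hch]
  have key : ∀ r : ℝ, r ^ (n - 1) * Real.exp (-(c * r)) =
      (c ^ (n - 1))⁻¹ * ((c * r) ^ (n - 1) * Real.exp (-(c * r))) := by
    intro r
    rw [mul_pow]
    field_simp
  simp_rw [key]
  rw [intervalIntegral.integral_const_mul,
    intervalIntegral.integral_comp_mul_left (fun t => t ^ (n - 1) * Real.exp (-t)) hc.ne',
    mul_zero, smul_eq_mul, ← mul_assoc]
  congr 1
  rw [Real.rpow_neg hc.le, Real.rpow_natCast]
  rw [show n = (n - 1) + 1 by omega, pow_succ]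
  rw [mul_inv]
  ring_nf
  rw [show 1 + (n - 1) - 1 = n - 1 from by omega]

lemma lig_le_factorial (n : ℕ) (hn : 0 < n) (x : ℝ) :
    lowerIncompleteGamma n x ≤ (Nat.factorial (n - 1) : ℝ) := by
  have h2 : (Nat.factorial (n - 1) : ℝ) = Real.Gamma n := by
    rw [show (n : ℝ) = ((n - 1 : ℕ) : ℝ) + 1 by rw [Nat.cast_sub hn]; simp,
      Real.Gamma_nat_eq_factorial]
  have h3 : Real.Gamma n = ∫ t in Set.Ioi (0 : ℝ), Real.exp (-t) * t ^ ((n : ℝ) - 1) :=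
    Real.Gamma_eq_integral (by exact_mod_cast hn)
  have h4 : lowerIncompleteGamma n x =
      ∫ t in Set.Ioc (0 : ℝ) x, Real.exp (-t) * t ^ ((n : ℝ) - 1) := by
    unfold lowerIncompleteGamma; congr 1; ext t; ring
  rw [h2, h3, h4]
  apply setIntegral_mono_set (Real.GammaIntegral_convergent (by exact_mod_cast hn))
  · filter_upwards [ae_restrict_mem measurableSet_Ioi] with t ht
    have h0 : (0:ℝ) < t := ht
    simp only [Pi.zero_apply]
    positivity
  · exact HasSubset.Subset.eventuallyLE Set.Ioc_subset_Ioi_self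

theorem cone_lower_gamma_estimate (n : ℕ) (hn : n = 2 ∨ n = 3)
    (x₀ p : EuclideanSpace ℝ (Fin n)) (hp : ‖p‖ = 1) (δ₀ : ℝ) (hδ₀ : 0 < δ₀)
    (A : Set (EuclideanSpace ℝ (Fin n))) (hAmeas : MeasurableSet A)
    (hcone : ∀ x ∈ A, ∀ t : ℝ, 0 < t → x₀ + t • (x - x₀) ∈ A)
    (hhalf : ∀ x ∈ A, ⟪p, x - x₀⟫ ≤ -δ₀ * ‖x - x₀‖)
    (h τ : ℝ) (hh : 0 < h) (hτ : 0 < τ)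
    (ξ : Fin n → ℂ) (hξ : ∀ i, (ξ i).re = τ * p i) :
    ‖∫ x in A ∩ Metric.ball x₀ h,
        Complex.exp (∑ i, ξ i * ((x i - x₀ i : ℝ) : ℂ))‖ ≤
      sphereSurface n * (δ₀ * τ) ^ (-(n : ℝ)) * lowerIncompleteGamma n (δ₀ * τ * h) ∧
    sphereSurface n * (δ₀ * τ) ^ (-(n : ℝ)) * lowerIncompleteGamma n (δ₀ * τ * h) ≤
      sphereSurface n * (Nat.factorial (n - 1) : ℝ) * (δ₀ * τ) ^ (-(n : ℝ)) := by
  have hn0 : 0 < n := by rcases hn with h' | h' <;> omega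
  set c : ℝ := δ₀ * τ with hcdef
  have hc : 0 < c := mul_pos hδ₀ hτ
  have hSmeas : MeasurableSet (A ∩ Metric.ball x₀ h) := hAmeas.inter measurableSet_ball
  -- continuity / integrability of the bounding function
  have hcont : Continuous (fun x : EuclideanSpace ℝ (Fin n) => Real.exp (-(c * ‖x - x₀‖))) := by
    continuity
  have hgi_ball : IntegrableOn (fun x : EuclideanSpace ℝ (Fin n) => Real.exp (-(c * ‖x - x₀‖)))
      (Metric.ball x₀ h) volume := by
    apply Measure.integrableOn_of_bounded (M := 1) measure_ball_lt_top.ne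
      hcont.aestronglyMeasurable
    filter_upwards with x
    rw [Real.norm_eq_abs, abs_of_pos (Real.exp_pos _)]
    apply Real.exp_le_one_iff.mpr
    have : 0 ≤ c * ‖x - x₀‖ := by positivity
    linarith
  have hgnonneg : ∀ x : EuclideanSpace ℝ (Fin n), 0 ≤ Real.exp (-(c * ‖x - x₀‖)) :=
    fun x => (Real.exp_pos _).le
  -- real part computation
  have hre : ∀ x : EuclideanSpace ℝ (Fin n),
      (∑ i, ξ i * ((x i - x₀ i : ℝ) : ℂ)).re = τ * ⟪p, x - x₀⟫ := by
    intro x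
    rw [Complex.re_sum, PiLp.inner_apply, Finset.mul_sum]
    apply Finset.sum_congr rfl
    intro i _
    simp [Complex.mul_re, hξ i, PiLp.sub_apply, RCLike.inner_apply]
    ring
  constructor
  · calc ‖∫ x in A ∩ Metric.ball x₀ h, Complex.exp (∑ i, ξ i * ((x i - x₀ i : ℝ) : ℂ))‖
        ≤ ∫ x in A ∩ Metric.ball x₀ h, ‖Complex.exp (∑ i, ξ i * ((x i - x₀ i : ℝ) : ℂ))‖ :=
          norm_integral_le_integral_norm _
      _ ≤ ∫ x in A ∩ Metric.ball x₀ h, Real.exp (-(c * ‖x - x₀‖)) := by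
          apply integral_mono_of_nonneg (Filter.Eventually.of_forall fun x => norm_nonneg _)
            (hgi_ball.mono_set Set.inter_subset_right)
          filter_upwards [ae_restrict_mem hSmeas] with x hx
          rw [Complex.norm_exp, hre x]
          apply Real.exp_le_exp.mpr
          have h1 := hhalf x hx.1
          have h2 : τ * ⟪p, x - x₀⟫ ≤ τ * (-δ₀ * ‖x - x₀‖) :=
            mul_le_mul_of_nonneg_left h1 hτ.le
          have h3 : τ * (-δ₀ * ‖x - x₀‖) = -(c * ‖x - x₀‖) := by rw [hcdef]; ring
          linarith
      _ ≤ ∫ x in Metric.ball x₀ h, Real.exp (-(c * ‖x - x₀‖)) := by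
          apply setIntegral_mono_set hgi_ball
            (Filter.Eventually.of_forall fun x => hgnonneg x)
            (HasSubset.Subset.eventuallyLE Set.inter_subset_right)
      _ = ∫ y in Metric.ball (0 : EuclideanSpace ℝ (Fin n)) h, Real.exp (-(c * ‖y‖)) := by
          rw [← integral_indicator measurableSet_ball, ← integral_indicator measurableSet_ball,
            ← integral_sub_right_eq_self
              (fun y => (Metric.ball (0 : EuclideanSpace ℝ (Fin n)) h).indicator
                (fun y => Real.exp (-(c * ‖y‖))) y) x₀]
          congr 1; ext x
          by_cases hx : ‖x - x₀‖ < h <;>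
            simp [Set.indicator_apply, Metric.mem_ball, dist_eq_norm, dist_zero_right, hx]
      _ = sphereSurface n * ∫ r in Set.Ioc (0 : ℝ) h, r ^ (n - 1) * Real.exp (-(c * r)) :=
          polar_ball n hn0 c h hc hh
      _ = sphereSurface n * (c ^ (-(n : ℝ)) * lowerIncompleteGamma n (c * h)) := by
          rw [sub_rule n hn0 c h hc hh]
      _ = sphereSurface n * c ^ (-(n : ℝ)) * lowerIncompleteGamma n (c * h) := by ring
  · have h1 : 0 ≤ sphereSurface n := by
      unfold sphereSurface; positivity
    have h2 : (0:ℝ) ≤ c ^ (-(n : ℝ)) := Real.rpow_nonneg hc.le _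
    calc sphereSurface n * c ^ (-(n : ℝ)) * lowerIncompleteGamma n (c * h)
        ≤ sphereSurface n * c ^ (-(n : ℝ)) * (Nat.factorial (n - 1) : ℝ) := by
          apply mul_le_mul_of_nonneg_left (lig_le_factorial n hn0 _) (by positivity)
      _ = sphereSurface n * (Nat.factorial (n - 1) : ℝ) * c ^ (-(n : ℝ)) := by ring
end

section
/- Let S_h = A ∩ B_h(x₀) where A ⊂ ℝⁿ is a cone with vertex x₀ satisfying p·(x-x₀) ≤ -δ₀|x-x₀| on A. Let f, g : ℝⁿ → ℂ with |f(x)| ≤ A₀ |x - x₀|^B on S_h for constants A₀, B > 0, and g ∈ L^q(S_h) with 1/p' + 1/q = 1, p' ∈ (1,∞). Then for ξ with Re ξ = τ p, τ > 0: | ∫_{S_h} e^{ξ·(x-x₀)} f(x) g(x) dx | ≤ A₀ σ(S^{n-1})^{1/p'} (δ₀ p' τ)^{-B - n/p'} γ(Bp'+n, δ₀ p' τ h)^{1/p'} ‖g‖_{L^q(S_h)}. -/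
open MeasureTheory Real
open scoped RealInnerProductSpace ENNReal

lemma memLp_of_int_rpow {α : Type*} [MeasurableSpace α] {μ : Measure α} {F : α → ℝ}
    (hF : ∀ x, 0 ≤ F x) {r : ℝ} (hr : 0 < r) (hm : AEStronglyMeasurable F μ)
    (hi : Integrable (fun x => F x ^ r) μ) : MemLp F (ENNReal.ofReal r) μ := by
  have hq0 : ENNReal.ofReal r ≠ 0 := by simp [ENNReal.ofReal_eq_zero, hr.not_ge]
  have hqt : ENNReal.ofReal r ≠ ⊤ := ENNReal.ofReal_ne_top
  refine (memLp_norm_rpow_iff (p := ENNReal.ofReal r) hm hq0 hqt).mp ?_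
  rw [ENNReal.div_self hq0 hqt, memLp_one_iff_integrable]
  refine hi.congr (Filter.Eventually.of_forall fun x => ?_)
  simp [ENNReal.toReal_ofReal hr.le, Real.norm_of_nonneg (hF x)]

lemma integrable_mul_of_memLp {α : Type*} [MeasurableSpace α] {μ : Measure α} {F G : α → ℝ}
    {p q : ℝ} (hpq : p.HolderConjugate q) (hF : MemLp F (ENNReal.ofReal p) μ)
    (hG : MemLp G (ENNReal.ofReal q) μ) : Integrable (fun x => F x * G x) μ := by
  rw [← memLp_one_iff_integrable]
  have := hG.smul (r := 1) hF
    (hpqr := ⟨by rw [inv_one]; exact hpq.inv_add_inv_ennreal⟩)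
  · exact this

lemma gamma_subst {s a h : ℝ} (ha : 0 < a) (hh : 0 < h) :
    lowerIncompleteGamma s (a * h) =
      a ^ s * ∫ y in Set.Ioc (0 : ℝ) h, y ^ (s - 1) * Real.exp (-(a * y)) := by
  have h1 : ∫ y in Set.Ioc (0 : ℝ) h, (fun t => t ^ (s - 1) * Real.exp (-t)) (a * y)
      = a ^ (s - 1) * ∫ y in Set.Ioc (0 : ℝ) h, y ^ (s - 1) * Real.exp (-(a * y)) := by
    rw [← integral_const_mul]
    refine setIntegral_congr_fun measurableSet_Ioc fun y hy => ?_
    simp only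
    rw [Real.mul_rpow ha.le hy.1.le]
    ring
  have h2 := intervalIntegral.mul_integral_comp_mul_left
    (a := (0:ℝ)) (b := h) (c := a) (f := fun t => t ^ (s - 1) * Real.exp (-t))
  rw [mul_zero] at h2
  have h0ah : (0:ℝ) ≤ a * h := by positivity
  unfold lowerIncompleteGamma
  rw [← intervalIntegral.integral_of_le h0ah, ← h2,
      intervalIntegral.integral_of_le hh.le, h1, ← mul_assoc]
  congr 1
  conv_rhs => rw [show s = 1 + (s - 1) by ring]
  rw [Real.rpow_add ha, Real.rpow_one]

lemma polar_int {n : ℕ} (hn : 2 ≤ n) (x₀ : EuclideanSpace ℝ (Fin n)) {a c h : ℝ}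
    (hh : 0 < h) :
    (∫ x : EuclideanSpace ℝ (Fin n),
        (if ‖x - x₀‖ < h then Real.exp (-(a * ‖x - x₀‖)) * ‖x - x₀‖ ^ c else 0)) =
      sphereSurface n *
        ∫ y in Set.Ioc (0 : ℝ) h, y ^ (c + n - 1) * Real.exp (-(a * y)) := by
  haveI : Nontrivial (EuclideanSpace ℝ (Fin n)) := by
    refine Module.nontrivial_of_finrank_pos (R := ℝ) ?_
    rw [finrank_euclideanSpace_fin]; omega
  set G : ℝ → ℝ := fun r => if r < h then Real.exp (-(a * r)) * r ^ c else 0 with hG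
  have h0 : (∫ x : EuclideanSpace ℝ (Fin n), G ‖x - x₀‖) = ∫ x : EuclideanSpace ℝ (Fin n), G ‖x‖ :=
    integral_sub_right_eq_self (fun x => G ‖x‖) x₀
  have h1 := MeasureTheory.integral_fun_norm_addHaar
    (volume : Measure (EuclideanSpace ℝ (Fin n))) G
  rw [finrank_euclideanSpace_fin] at h1
  have h2 : (∫ y in Set.Ioi (0:ℝ), y ^ (n - 1) • G y) =
      ∫ y in Set.Ioc (0 : ℝ) h, y ^ (c + n - 1) * Real.exp (-(a * y)) := by
    have e1 : (∫ y in Set.Ioi (0:ℝ), y ^ (n - 1) • G y) =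
        ∫ y in Set.Ioi (0:ℝ),
          Set.indicator (Set.Ioo 0 h) (fun y => y ^ (c + n - 1) * Real.exp (-(a * y))) y := by
      refine setIntegral_congr_fun measurableSet_Ioi fun y hy => ?_
      have hy : (0:ℝ) < y := hy
      by_cases hyh : y < h
      · rw [Set.indicator_of_mem (Set.mem_Ioo.mpr ⟨hy, hyh⟩), hG]
        simp only [if_pos hyh, smul_eq_mul]
        have hcast : ((n - 1 : ℕ) : ℝ) = (n : ℝ) - 1 := by
          rw [Nat.cast_sub (by omega : 1 ≤ n), Nat.cast_one]
        calc y ^ (n - 1 : ℕ) * (rexp (-(a * y)) * y ^ c)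
            = y ^ (((n - 1 : ℕ) : ℝ)) * y ^ c * rexp (-(a * y)) := by
              rw [Real.rpow_natCast]; ring
          _ = y ^ (c + n - 1) * rexp (-(a * y)) := by
              rw [← Real.rpow_add hy, hcast, show (n:ℝ) - 1 + c = c + n - 1 by ring]
      · rw [Set.indicator_of_notMem (by simp [hyh] : y ∉ Set.Ioo (0:ℝ) h), hG]
        simp [hyh]
    rw [e1, setIntegral_indicator measurableSet_Ioo,
      Set.inter_eq_self_of_subset_right Set.Ioo_subset_Ioi_self,
      ← integral_Ioc_eq_integral_Ioo]
  rw [h0, h1, h2, nsmul_eq_mul, smul_eq_mul, sphereSurface, mul_assoc, measureReal_def]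

set_option maxHeartbeats 1000000 in
theorem cone_holder_estimate (n : ℕ) (hn : n = 2 ∨ n = 3)
    (x₀ p : EuclideanSpace ℝ (Fin n)) (hp : ‖p‖ = 1) (δ₀ : ℝ) (hδ₀ : 0 < δ₀)
    (A : Set (EuclideanSpace ℝ (Fin n))) (hAmeas : MeasurableSet A)
    (hcone : ∀ x ∈ A, ∀ t : ℝ, 0 < t → x₀ + t • (x - x₀) ∈ A)
    (hhalf : ∀ x ∈ A, ⟪p, x - x₀⟫ ≤ -δ₀ * ‖x - x₀‖)
    (h τ : ℝ) (hh : 0 < h) (hτ : 0 < τ)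
    (ξ : Fin n → ℂ) (hξ : ∀ i, (ξ i).re = τ * p i)
    (f g : EuclideanSpace ℝ (Fin n) → ℂ)
    (A₀ B : ℝ) (hA₀ : 0 < A₀) (hB : 0 < B)
    (hf : ∀ x ∈ A ∩ Metric.ball x₀ h, ‖f x‖ ≤ A₀ * ‖x - x₀‖ ^ B)
    (p' q : ℝ) (hp' : 1 < p') (hpq : 1 / p' + 1 / q = 1)
    (hg : IntegrableOn (fun x => ‖g x‖ ^ q) (A ∩ Metric.ball x₀ h))
    (hint : IntegrableOn
      (fun x => Complex.exp (∑ i, ξ i * ((x i - x₀ i : ℝ) : ℂ)) * f x * g x)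
      (A ∩ Metric.ball x₀ h)) :
    ‖∫ x in A ∩ Metric.ball x₀ h,
        Complex.exp (∑ i, ξ i * ((x i - x₀ i : ℝ) : ℂ)) * f x * g x‖ ≤
      A₀ * sphereSurface n ^ (1 / p') * (δ₀ * p' * τ) ^ (-B - n / p') *
        lowerIncompleteGamma (B * p' + n) (δ₀ * p' * τ * h) ^ (1 / p') *
        (∫ x in A ∩ Metric.ball x₀ h, ‖g x‖ ^ q) ^ (1 / q) := by
  have hn2 : 2 ≤ n := by rcases hn with h' | h' <;> omega
  set S := A ∩ Metric.ball x₀ h with hSdef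
  have hSmeas : MeasurableSet S := hAmeas.inter Metric.isOpen_ball.measurableSet
  have hp'pos : 0 < p' := lt_trans zero_lt_one hp'
  have hp'ne : p' ≠ 0 := hp'pos.ne'
  have hpq' : p'.HolderConjugate q := Real.holderConjugate_iff.mpr ⟨hp', by rw [← one_div, ← one_div]; exact hpq⟩
  have hqpos : 0 < q := hpq'.symm.pos
  set a := δ₀ * p' * τ with hadef
  have hapos : 0 < a := by positivity
  have hBp' : 0 < B * p' := by positivity
  set Φ : EuclideanSpace ℝ (Fin n) → ℝ :=
    fun x => if ‖x - x₀‖ < h then Real.exp (-(a * ‖x - x₀‖)) * ‖x - x₀‖ ^ (B * p') else 0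
    with hΦdef
  have hΦnonneg : ∀ x, 0 ≤ Φ x := by
    intro x
    rw [hΦdef]
    dsimp only
    split
    · positivity
    · exact le_refl _
  -- integrability of Φ
  have hψcont : Continuous (fun x : EuclideanSpace ℝ (Fin n) =>
      Real.exp (-(a * ‖x - x₀‖)) * ‖x - x₀‖ ^ (B * p')) := by
    have hc : Continuous fun x : EuclideanSpace ℝ (Fin n) => ‖x - x₀‖ := by fun_prop
    apply Continuous.mul
    · exact Real.continuous_exp.comp (by fun_prop)
    · exact continuous_iff_continuousAt.mpr fun x =>
        (Real.continuousAt_rpow_const _ _ (Or.inr hBp'.le)).comp hc.continuousAt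
  have hΦeq : Φ = Set.indicator (Metric.ball x₀ h)
      (fun x => Real.exp (-(a * ‖x - x₀‖)) * ‖x - x₀‖ ^ (B * p')) := by
    funext x
    rw [hΦdef]
    dsimp only
    by_cases hx : ‖x - x₀‖ < h
    · rw [if_pos hx, Set.indicator_of_mem (by rwa [Metric.mem_ball, dist_eq_norm])]
    · rw [if_neg hx, Set.indicator_of_notMem (by rw [Metric.mem_ball, dist_eq_norm]; exact hx)]
  have hΦint : Integrable Φ (volume : Measure (EuclideanSpace ℝ (Fin n))) := by
    rw [hΦeq, integrable_indicator_iff Metric.isOpen_ball.measurableSet]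
    exact (hψcont.continuousOn.integrableOn_compact
      (isCompact_closedBall x₀ h)).mono_set Metric.ball_subset_closedBall
  have hΦintS : IntegrableOn Φ S := hΦint.integrableOn
  -- value of ∫ Φ
  have hγ := gamma_subst (s := B * p' + n) hapos hh
  have hpolar := polar_int hn2 x₀ (a := a) (c := B * p') hh
  have hΦval : ∫ x, Φ x =
      sphereSurface n * ∫ y in Set.Ioc (0 : ℝ) h, y ^ (B * p' + n - 1) * Real.exp (-(a * y)) := by
    rw [hΦdef]; exact hpolar
  have hγnonneg : 0 ≤ lowerIncompleteGamma (B * p' + n) (a * h) := by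
    refine setIntegral_nonneg measurableSet_Ioc fun t ht => ?_
    have := ht.1
    positivity
  have hσnonneg : 0 ≤ sphereSurface n :=
    mul_nonneg (Nat.cast_nonneg _) ENNReal.toReal_nonneg
  have hI₀ : (∫ y in Set.Ioc (0 : ℝ) h, y ^ (B * p' + n - 1) * Real.exp (-(a * y))) =
      a ^ (-(B * p' + n)) * lowerIncompleteGamma (B * p' + n) (a * h) := by
    rw [hγ, ← mul_assoc, ← Real.rpow_add hapos,
      show -(B * p' + (n:ℝ)) + (B * p' + n) = 0 by ring, Real.rpow_zero, one_mul]
  -- MemLp facts on S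
  have hgabs_meas : AEStronglyMeasurable (fun x => ‖g x‖)
      (volume.restrict S) := by
    have h1 : AEMeasurable (fun x => ‖g x‖ ^ q) (volume.restrict S) :=
      hg.aemeasurable
    have h2 : AEMeasurable (fun x => (‖g x‖ ^ q) ^ (1 / q))
        (volume.restrict S) := h1.pow aemeasurable_const
    refine (h2.congr (Filter.Eventually.of_forall fun x => ?_)).aestronglyMeasurable
    show (‖g x‖ ^ q) ^ (1 / q) = ‖g x‖
    rw [← Real.rpow_mul (norm_nonneg _), mul_one_div, div_self hqpos.ne', Real.rpow_one]
  have hgmem : MemLp (fun x => ‖g x‖) (ENNReal.ofReal q) (volume.restrict S) :=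
    memLp_of_int_rpow (fun x => norm_nonneg _) hqpos hgabs_meas hg
  have hΦppow : ∀ x, (Φ x ^ (1 / p')) ^ p' = Φ x := by
    intro x
    rw [← Real.rpow_mul (hΦnonneg x), one_div_mul_cancel hp'ne, Real.rpow_one]
  have hΦp_meas : AEStronglyMeasurable (fun x => Φ x ^ (1 / p')) (volume.restrict S) :=
    ((hΦint.aestronglyMeasurable.aemeasurable.pow
      aemeasurable_const).aestronglyMeasurable).restrict
  have hΦmemp : MemLp (fun x => Φ x ^ (1 / p')) (ENNReal.ofReal p') (volume.restrict S) := by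
    refine memLp_of_int_rpow (fun x => Real.rpow_nonneg (hΦnonneg x) _) hp'pos hΦp_meas ?_
    exact hΦintS.congr (Filter.Eventually.of_forall fun x => (hΦppow x).symm)
  have hprod_int : Integrable (fun x => Φ x ^ (1 / p') * ‖g x‖)
      (volume.restrict S) := integrable_mul_of_memLp hpq' hΦmemp hgmem
  -- Hölder's inequality
  have hHolder := integral_mul_le_Lp_mul_Lq_of_nonneg (μ := volume.restrict S) hpq'
    (f := fun x => Φ x ^ (1 / p')) (g := fun x => ‖g x‖)
    (Filter.Eventually.of_forall fun x => Real.rpow_nonneg (hΦnonneg x) _)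
    (Filter.Eventually.of_forall fun x => norm_nonneg _) hΦmemp hgmem
  rw [integral_congr_ae (Filter.Eventually.of_forall fun x => hΦppow x)] at hHolder
  -- pointwise bound
  have hpoint : ∀ x ∈ S, ‖Complex.exp (∑ i, ξ i * ((x i - x₀ i : ℝ) : ℂ)) * f x * g x‖ ≤
      A₀ * (Φ x ^ (1 / p') * ‖g x‖) := by
    intro x hx
    obtain ⟨hxA, hxB⟩ := hx
    have hr : ‖x - x₀‖ < h := by rwa [Metric.mem_ball, dist_eq_norm] at hxB
    have hr0 : (0 : ℝ) ≤ ‖x - x₀‖ := norm_nonneg _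
    have hre : (∑ i, ξ i * ((x i - x₀ i : ℝ) : ℂ)).re = τ * ⟪p, x - x₀⟫ := by
      rw [Complex.re_sum]
      have hterm : ∀ i, (ξ i * ((x i - x₀ i : ℝ) : ℂ)).re = τ * (p i * (x i - x₀ i)) := by
        intro i
        rw [Complex.mul_re]
        simp only [hξ i, Complex.ofReal_re, Complex.ofReal_im, mul_zero, sub_zero]
        ring
      rw [Finset.sum_congr rfl (fun i _ => hterm i), ← Finset.mul_sum]
      have hip : ⟪p, x - x₀⟫ = ∑ i, p i * (x i - x₀ i) := by
        rw [PiLp.inner_apply]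
        simp [RCLike.inner_apply, PiLp.sub_apply, mul_comm]
      rw [hip]
    have hΦpow : Φ x ^ (1 / p') = Real.exp (-(δ₀ * τ * ‖x - x₀‖)) * ‖x - x₀‖ ^ B := by
      rw [hΦdef]
      dsimp only
      rw [if_pos hr, Real.mul_rpow (Real.exp_pos _).le (Real.rpow_nonneg hr0 _),
        ← Real.exp_mul, ← Real.rpow_mul hr0]
      congr 2
      · field_simp
        ring
      · field_simp
    have hnorm : ‖Complex.exp (∑ i, ξ i * ((x i - x₀ i : ℝ) : ℂ)) * f x * g x‖ =
        Real.exp ((∑ i, ξ i * ((x i - x₀ i : ℝ) : ℂ)).re) *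
          (‖f x‖ * ‖g x‖) := by
      simp [norm_mul, Complex.norm_exp, mul_assoc]
    rw [hnorm, hre]
    have hexp : Real.exp (τ * ⟪p, x - x₀⟫) ≤ Real.exp (-(δ₀ * τ * ‖x - x₀‖)) := by
      apply Real.exp_le_exp.mpr
      have := mul_le_mul_of_nonneg_left (hhalf x hxA) hτ.le
      nlinarith
    calc Real.exp (τ * ⟪p, x - x₀⟫) * (‖f x‖ * ‖g x‖)
        ≤ Real.exp (-(δ₀ * τ * ‖x - x₀‖)) * ((A₀ * ‖x - x₀‖ ^ B) * ‖g x‖) := by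
          apply mul_le_mul hexp
          · exact mul_le_mul_of_nonneg_right (hf x ⟨hxA, hxB⟩) (norm_nonneg _)
          · positivity
          · positivity
      _ = A₀ * (Φ x ^ (1 / p') * ‖g x‖) := by rw [hΦpow]; ring
  -- set integral bounds
  have hSΦ_le : ∫ x in S, Φ x ≤ ∫ x, Φ x :=
    setIntegral_le_integral hΦint (Filter.Eventually.of_forall hΦnonneg)
  have hSΦ_nonneg : 0 ≤ ∫ x in S, Φ x :=
    setIntegral_nonneg hSmeas fun x _ => hΦnonneg x
  have hQnonneg : 0 ≤ (∫ x in S, ‖g x‖ ^ q) ^ (1 / q) := by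
    apply Real.rpow_nonneg
    exact setIntegral_nonneg hSmeas fun x _ => Real.rpow_nonneg (norm_nonneg _) _
  -- main chain
  calc ‖∫ x in S, Complex.exp (∑ i, ξ i * ((x i - x₀ i : ℝ) : ℂ)) * f x * g x‖
      ≤ ∫ x in S, ‖Complex.exp (∑ i, ξ i * ((x i - x₀ i : ℝ) : ℂ)) * f x * g x‖ :=
        norm_integral_le_integral_norm _
    _ ≤ ∫ x in S, A₀ * (Φ x ^ (1 / p') * ‖g x‖) := by
        refine setIntegral_mono_on hint.norm (hprod_int.const_mul A₀) hSmeas hpoint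
    _ = A₀ * ∫ x in S, Φ x ^ (1 / p') * ‖g x‖ := integral_const_mul _ _
    _ ≤ A₀ * ((∫ x in S, Φ x) ^ (1 / p') * (∫ x in S, ‖g x‖ ^ q) ^ (1 / q)) :=
        mul_le_mul_of_nonneg_left hHolder hA₀.le
    _ ≤ A₀ * (((sphereSurface n * (a ^ (-(B * p' + n)) *
          lowerIncompleteGamma (B * p' + n) (a * h)))) ^ (1 / p') *
          (∫ x in S, ‖g x‖ ^ q) ^ (1 / q)) := by
        apply mul_le_mul_of_nonneg_left _ hA₀.le
        apply mul_le_mul_of_nonneg_right _ hQnonneg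
        apply Real.rpow_le_rpow hSΦ_nonneg _ (by positivity)
        rw [← hI₀, ← hΦval]
        exact hSΦ_le
    _ = A₀ * sphereSurface n ^ (1 / p') * a ^ (-B - n / p') *
          lowerIncompleteGamma (B * p' + n) (a * h) ^ (1 / p') *
          (∫ x in S, ‖g x‖ ^ q) ^ (1 / q) := by
        rw [Real.mul_rpow hσnonneg (mul_nonneg (Real.rpow_nonneg hapos.le _) hγnonneg),
          Real.mul_rpow (Real.rpow_nonneg hapos.le _) hγnonneg,
          ← Real.rpow_mul hapos.le,
          show -(B * p' + (n:ℝ)) * (1 / p') = -B - n / p' by field_simp; ring]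
        ring
end

section
/- Let z = a + i b ∈ ℂⁿ be a nonzero complex vector (a, b ∈ ℝⁿ, n = 2 or 3) and fix p ∈ S^{n-1}. Then there exists a unit vector p⊥ orthogonal to p and a constant C₀ > 0 (depending on a, b, p, p⊥) such that for all t ≥ 1, |z · (p⊥ − i t p)| ≥ C₀, where · is the bilinear (non-conjugated) dot product on ℂⁿ. Consequently, with η = p⊥ − i√(1+κ_s²/τ²) p and τ ≥ κ_s, one has |z·η| ≥ C₀ for all such τ. -/
open Real
open scoped RealInnerProductSpace

private lemma exists_unit_orth (n : ℕ) (hn : n = 2 ∨ n = 3)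
    (p : EuclideanSpace ℝ (Fin n)) (hp : ‖p‖ = 1) :
    ∃ q : EuclideanSpace ℝ (Fin n), ‖q‖ = 1 ∧ ⟪q, p⟫ = 0 := by
  have hp0 : p ≠ 0 := by intro h; rw [h, norm_zero] at hp; norm_num at hp
  have hfr : Module.finrank ℝ (EuclideanSpace ℝ (Fin n)) = n := by simp
  have h1 : Module.finrank ℝ (ℝ ∙ p) = 1 := finrank_span_singleton hp0
  have hsum := Submodule.finrank_add_finrank_orthogonal (K := ℝ ∙ p)
  have hpos : 0 < Module.finrank ℝ ((ℝ ∙ p)ᗮ : Submodule ℝ (EuclideanSpace ℝ (Fin n))) := by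
    rcases hn with h | h <;> omega
  obtain ⟨v, hv, hv0⟩ := Submodule.exists_mem_ne_zero_of_ne_bot (p := (ℝ ∙ p)ᗮ) (by
    intro h; rw [h] at hpos; simp at hpos)
  refine ⟨‖v‖⁻¹ • v, ?_, ?_⟩
  · rw [norm_smul]; simp [norm_ne_zero_iff.mpr hv0]
  · rw [real_inner_smul_left]
    have := (Submodule.mem_orthogonal _ _).mp hv p (Submodule.mem_span_singleton_self p)
    rw [real_inner_comm] at this
    rw [this, mul_zero]

private lemma sum_eq (n : ℕ) (a b p' p : EuclideanSpace ℝ (Fin n)) (t : ℝ) :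
    (∑ j, ((a j : ℝ) + (b j : ℝ) * Complex.I) *
      (((p' j : ℝ) : ℂ) - ((t * p j : ℝ) : ℂ) * Complex.I))
    = ((⟪a, p'⟫ + t * ⟪b, p⟫ : ℝ) : ℂ) + ((⟪b, p'⟫ - t * ⟪a, p⟫ : ℝ) : ℂ) * Complex.I := by
  simp only [PiLp.inner_apply, RCLike.inner_apply, conj_trivial]
  push_cast
  simp only [Finset.mul_sum, Finset.sum_mul, ← Finset.sum_sub_distrib, ← Finset.sum_add_distrib]
  apply Finset.sum_congr rfl
  intro j _
  ring_nf
  rw [Complex.I_sq]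
  ring

private lemma re_bound (x c t : ℝ) (h : 0 ≤ x * c) (ht : 1 ≤ t) : |c| ≤ |x + t * c| := by
  rw [← Real.sqrt_sq_eq_abs, ← Real.sqrt_sq_eq_abs]
  apply Real.sqrt_le_sqrt
  have h1 : 0 ≤ t * (x * c) := mul_nonneg (by linarith) h
  have h2 : 0 ≤ (t ^ 2 - 1) * c ^ 2 := mul_nonneg (by nlinarith) (sq_nonneg c)
  nlinarith [sq_nonneg x]

private lemma sign_choice (x c : ℝ) : ∃ ε : ℝ, (ε = 1 ∨ ε = -1) ∧ 0 ≤ (ε * x) * c := by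
  rcases le_or_gt 0 (x * c) with h | h
  · exact ⟨1, Or.inl rfl, by nlinarith⟩
  · exact ⟨-1, Or.inr rfl, by nlinarith⟩

private lemma finishing (n : ℕ) (a b p p' : EuclideanSpace ℝ (Fin n)) (C₀ : ℝ)
    (h1 : ‖p'‖ = 1) (h2 : ⟪p', p⟫ = 0) (hC : 0 < C₀)
    (key : ∀ t : ℝ, 1 ≤ t →
      C₀ ≤ |⟪a, p'⟫ + t * ⟪b, p⟫| ∨ C₀ ≤ |⟪b, p'⟫ - t * ⟪a, p⟫|) :
    ∃ p' : EuclideanSpace ℝ (Fin n), ‖p'‖ = 1 ∧ ⟪p', p⟫ = 0 ∧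
      ∃ C₀ : ℝ, 0 < C₀ ∧
        (∀ t : ℝ, 1 ≤ t →
          C₀ ≤ ‖(∑ j, ((a j : ℝ) + (b j : ℝ) * Complex.I) *
            (((p' j : ℝ) : ℂ) - ((t * p j : ℝ) : ℂ) * Complex.I))‖) ∧
        (∀ κs τ : ℝ, 0 < κs → κs ≤ τ →
          C₀ ≤ ‖(∑ j, ((a j : ℝ) + (b j : ℝ) * Complex.I) *
            (((p' j : ℝ) : ℂ) - ((Real.sqrt (1 + κs ^ 2 / τ ^ 2) * p j : ℝ) : ℂ) * Complex.I))‖) := by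
  have main : ∀ t : ℝ, 1 ≤ t →
      C₀ ≤ ‖(∑ j, ((a j : ℝ) + (b j : ℝ) * Complex.I) *
        (((p' j : ℝ) : ℂ) - ((t * p j : ℝ) : ℂ) * Complex.I))‖ := by
    intro t ht
    rw [sum_eq]
    rcases key t ht with h | h
    · refine le_trans h (le_trans ?_ (Complex.abs_re_le_norm _))
      simp
    · refine le_trans h (le_trans ?_ (Complex.abs_im_le_norm _))
      simp
  refine ⟨p', h1, h2, C₀, hC, main, ?_⟩
  intro κs τ hκ hτ
  apply main
  rw [Real.one_le_sqrt]
  have : 0 ≤ κs ^ 2 / τ ^ 2 := by positivity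
  linarith

theorem cgo_amplitude_lower_bound (n : ℕ) (hn : n = 2 ∨ n = 3)
    (a b : EuclideanSpace ℝ (Fin n)) (hz : ¬(a = 0 ∧ b = 0))
    (p : EuclideanSpace ℝ (Fin n)) (hp : ‖p‖ = 1) :
    ∃ p' : EuclideanSpace ℝ (Fin n), ‖p'‖ = 1 ∧ ⟪p', p⟫ = 0 ∧
      ∃ C₀ : ℝ, 0 < C₀ ∧
        (∀ t : ℝ, 1 ≤ t →
          C₀ ≤ ‖(∑ j, ((a j : ℝ) + (b j : ℝ) * Complex.I) *
            (((p' j : ℝ) : ℂ) - ((t * p j : ℝ) : ℂ) * Complex.I))‖) ∧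
        (∀ κs τ : ℝ, 0 < κs → κs ≤ τ →
          C₀ ≤ ‖(∑ j, ((a j : ℝ) + (b j : ℝ) * Complex.I) *
            (((p' j : ℝ) : ℂ) - ((Real.sqrt (1 + κs ^ 2 / τ ^ 2) * p j : ℝ) : ℂ) * Complex.I))‖) := by
  obtain ⟨q, hq1, hq2⟩ := exists_unit_orth n hn p hp
  by_cases hβ : ⟪b, p⟫ = 0
  · by_cases hα : ⟪a, p⟫ = 0
    · -- both components vanish: constant amplitude
      by_cases ha : a = 0
      · have hb : b ≠ 0 := fun h => hz ⟨ha, h⟩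
        have hbn : 0 < ‖b‖ := norm_pos_iff.mpr hb
        refine finishing n a b p (‖b‖⁻¹ • b) ‖b‖ ?_ ?_ hbn ?_
        · rw [norm_smul]; simp [norm_ne_zero_iff.mpr hb]
        · rw [real_inner_smul_left, hβ, mul_zero]
        · intro t ht
          right
          rw [hα, real_inner_smul_right, real_inner_self_eq_norm_sq]
          have : ‖b‖⁻¹ * ‖b‖ ^ 2 = ‖b‖ := by field_simp
          rw [this, mul_zero, sub_zero, abs_of_pos hbn]
      · have han : 0 < ‖a‖ := norm_pos_iff.mpr ha
        refine finishing n a b p (‖a‖⁻¹ • a) ‖a‖ ?_ ?_ han ?_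
        · rw [norm_smul]; simp [norm_ne_zero_iff.mpr ha]
        · rw [real_inner_smul_left, hα, mul_zero]
        · intro t ht
          left
          rw [hβ, real_inner_smul_right, real_inner_self_eq_norm_sq]
          have : ‖a‖⁻¹ * ‖a‖ ^ 2 = ‖a‖ := by field_simp
          rw [this, mul_zero, add_zero, abs_of_pos han]
    · -- β = 0, α ≠ 0
      obtain ⟨ε, hε, hsgn⟩ := sign_choice ⟪b, q⟫ (-⟪a, p⟫)
      have hεn : |ε| = 1 := by rcases hε with h | h <;> simp [h]
      refine finishing n a b p (ε • q) |⟪a, p⟫| ?_ ?_ (abs_pos.mpr hα) ?_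
      · rw [norm_smul, hq1, mul_one, Real.norm_eq_abs, hεn]
      · rw [real_inner_smul_left, hq2, mul_zero]
      · intro t ht
        right
        have h := re_bound (ε * ⟪b, q⟫) (-⟪a, p⟫) t hsgn ht
        rw [abs_neg] at h
        rw [real_inner_smul_right]
        calc |⟪a, p⟫| ≤ |ε * ⟪b, q⟫ + t * -⟪a, p⟫| := h
          _ = |ε * ⟪b, q⟫ - t * ⟪a, p⟫| := by rw [mul_neg, ← sub_eq_add_neg]
  · -- β ≠ 0
    obtain ⟨ε, hε, hsgn⟩ := sign_choice ⟪a, q⟫ ⟪b, p⟫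
    have hεn : |ε| = 1 := by rcases hε with h | h <;> simp [h]
    refine finishing n a b p (ε • q) |⟪b, p⟫| ?_ ?_ (abs_pos.mpr hβ) ?_
    · rw [norm_smul, hq1, mul_one, Real.norm_eq_abs, hεn]
    · rw [real_inner_smul_left, hq2, mul_zero]
    · intro t ht
      left
      rw [real_inner_smul_right]
      exact re_bound (ε * ⟪a, q⟫) ⟪b, p⟫ t hsgn ht
end
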